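/- Suppose λ > 0, μ > 0, λ ≠ μ, the corner equation (E) and the superposition formula (S1) hold for all k ∈ ℤ/Nℤ, and assume the nondegeneracy conditions: for all k, e^{x̃_k−x_k} ≠ 1, e^{x̂_k−x_k} ≠ 1, e^{x̂̃_k−x̃_k} ≠ 1, e^{x̂̃_k−x̂_k} ≠ 1 and λ ≠ μ·e^{x̂_k−x̃_k}. Then the superposition formula (S2) and the corner equations (E1), (E2) and (E12) hold for all k ∈ ℤ/Nℤ. -/

import Mathlib

/-- For the modified Toda lattice with periodic boundary
conditions, corner equation (E) and superposition formula (S1) (plus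
nondegeneracy) imply (S2), (E1), (E2), (E12). -/
theorem modToda_superposition
    (N : ℕ) [NeZero N] (x xt xh xth : ZMod N → ℝ) (lam mu : ℝ)
    (hlam : 0 < lam) (hmu : 0 < mu) (hlm : lam ≠ mu)
    (hE : ∀ k : ZMod N,
      (Real.exp (xt k - x k) - 1) * (lam + Real.exp (x k - xt (k - 1))) =
      (Real.exp (xh k - x k) - 1) * (mu + Real.exp (x k - xh (k - 1))))
    (hS1 : ∀ k : ZMod N,
      (Real.exp (xth k - xh k) - 1) * (lam + Real.exp (x (k + 1) - xt k)) =
      (Real.exp (xth k - xt k) - 1) * (mu + Real.exp (x (k + 1) - xh k)))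
    (hnd : ∀ k : ZMod N,
      Real.exp (xt k - x k) ≠ 1 ∧ Real.exp (xh k - x k) ≠ 1 ∧
      Real.exp (xth k - xt k) ≠ 1 ∧ Real.exp (xth k - xh k) ≠ 1 ∧
      lam ≠ mu * Real.exp (xh k - xt k)) :
    (∀ k : ZMod N,
      (Real.exp (xt (k + 1) - x (k + 1)) - 1) * (lam + Real.exp (xh (k + 1) - xth k)) =
      (Real.exp (xh (k + 1) - x (k + 1)) - 1) * (mu + Real.exp (xt (k + 1) - xth k))) ∧
    (∀ k : ZMod N,
      (Real.exp (xt k - x k) - 1) * (lam + Real.exp (x (k + 1) - xt k)) =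
      (Real.exp (xth k - xt k) - 1) * (mu + Real.exp (xt k - xth (k - 1)))) ∧
    (∀ k : ZMod N,
      (Real.exp (xh k - x k) - 1) * (mu + Real.exp (x (k + 1) - xh k)) =
      (Real.exp (xth k - xh k) - 1) * (lam + Real.exp (xh k - xth (k - 1)))) ∧
    (∀ k : ZMod N,
      (Real.exp (xth k - xh k) - 1) * (lam + Real.exp (xh (k + 1) - xth k)) =
      (Real.exp (xth k - xt k) - 1) * (mu + Real.exp (xt (k + 1) - xth k))) := by
  -- notation
  have hexp : ∀ t : ℝ, Real.exp t ≠ 0 := Real.exp_ne_zero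
  -- cleared S1 at k:  (d - c)(lam b + A) = (d - b)(mu c + A)
  have hS1c : ∀ k : ZMod N,
      (Real.exp (xth k) - Real.exp (xh k)) * (lam * Real.exp (xt k) + Real.exp (x (k+1))) =
      (Real.exp (xth k) - Real.exp (xt k)) * (mu * Real.exp (xh k) + Real.exp (x (k+1))) := by
    intro k
    have h := hS1 k
    rw [Real.exp_sub, Real.exp_sub, Real.exp_sub, Real.exp_sub] at h
    field_simp at h
    have h' : ((Real.exp (xth k) - Real.exp (xh k)) * (lam * Real.exp (xt k) + Real.exp (x (k+1))))
        * (Real.exp (xt k) * Real.exp (xh k)) =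
        ((Real.exp (xth k) - Real.exp (xt k)) * (mu * Real.exp (xh k) + Real.exp (x (k+1))))
        * (Real.exp (xt k) * Real.exp (xh k)) := by linear_combination (Real.exp (xt k) * Real.exp (xh k)) * h
    exact mul_right_cancel₀ (by positivity) h'
  -- cleared E at k+1 : (B - A)(lam b + A) c = (C - A)(mu c + A) b
  have hEc : ∀ k : ZMod N,
      (Real.exp (xt (k+1)) - Real.exp (x (k+1))) * (lam * Real.exp (xt k) + Real.exp (x (k+1)))
        * Real.exp (xh k) =
      (Real.exp (xh (k+1)) - Real.exp (x (k+1))) * (mu * Real.exp (xh k) + Real.exp (x (k+1)))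
        * Real.exp (xt k) := by
    intro k
    have h := hE (k+1)
    rw [add_sub_cancel_right] at h
    rw [Real.exp_sub, Real.exp_sub, Real.exp_sub, Real.exp_sub] at h
    field_simp at h
    have h' : ((Real.exp (xt (k+1)) - Real.exp (x (k+1))) * (lam * Real.exp (xt k) + Real.exp (x (k+1)))
        * Real.exp (xh k)) * Real.exp (x (k+1)) =
        ((Real.exp (xh (k+1)) - Real.exp (x (k+1))) * (mu * Real.exp (xh k) + Real.exp (x (k+1)))
        * Real.exp (xt k)) * Real.exp (x (k+1)) := by linear_combination Real.exp (x (k+1)) * h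
    exact mul_right_cancel₀ (by positivity) h'
  -- the nondegeneracy factor: lam * b ≠ mu * c
  have hf : ∀ k : ZMod N, lam * Real.exp (xt k) - mu * Real.exp (xh k) ≠ 0 := by
    intro k h
    apply (hnd k).2.2.2.2
    rw [Real.exp_sub]
    field_simp
    linear_combination h
  -- S2 for all k
  have hS2 : ∀ k : ZMod N,
      (Real.exp (xt (k + 1) - x (k + 1)) - 1) * (lam + Real.exp (xh (k + 1) - xth k)) =
      (Real.exp (xh (k + 1) - x (k + 1)) - 1) * (mu + Real.exp (xt (k + 1) - xth k)) := by
    intro k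
    set A := Real.exp (x (k+1)) with hA
    set b := Real.exp (xt k) with hb
    set c := Real.exp (xh k) with hc
    set d := Real.exp (xth k) with hd
    set B := Real.exp (xt (k+1)) with hB
    set C := Real.exp (xh (k+1)) with hC
    have key : (lam * b - mu * c) * ((B - A) * (lam * d + C)) =
        (lam * b - mu * c) * ((C - A) * (mu * d + B)) := by
      linear_combination (lam - mu) * hEc k +
        (lam * B - mu * C - (lam - mu) * A) * hS1c k
    have key2 := mul_left_cancel₀ (hf k) key
    rw [Real.exp_sub, Real.exp_sub, Real.exp_sub, Real.exp_sub]
    field_simp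
    simp only [← hA, ← hb, ← hc, ← hd, ← hB, ← hC]
    linear_combination key2
  refine ⟨hS2, ?_, ?_, ?_⟩
  · -- E1
    intro k
    have hG := hS2 (k - 1)
    rw [sub_add_cancel] at hG
    rw [Real.exp_sub, Real.exp_sub, Real.exp_sub, Real.exp_sub] at hG
    set a := Real.exp (x k) with ha
    set b := Real.exp (xt k) with hb
    set c := Real.exp (xh k) with hc
    set d := Real.exp (xth k) with hd
    set A := Real.exp (x (k+1)) with hA
    set D := Real.exp (xth (k-1)) with hD
    have hGc : (b - a) * (lam * D + c) = (c - a) * (mu * D + b) := by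
      have ha0 : a ≠ 0 := ha ▸ Real.exp_ne_zero _
      have hD0 : D ≠ 0 := hD ▸ Real.exp_ne_zero _
      field_simp at hG
      linear_combination hG
    have key : (mu - lam) * (D * (b - a) * (lam * b + A)) =
        (mu - lam) * (a * (d - b) * (mu * D + b)) := by
      linear_combination (-(A + mu * d + (lam - mu) * b)) * hGc + (a + mu * D) * hS1c k
    have key2 := mul_left_cancel₀ (sub_ne_zero.mpr (Ne.symm hlm)) key
    rw [Real.exp_sub, Real.exp_sub, Real.exp_sub, Real.exp_sub]
    field_simp
    simp only [← ha, ← hb, ← hc, ← hd, ← hA, ← hD]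
    linear_combination key2
  · -- E2
    intro k
    have hG := hS2 (k - 1)
    rw [sub_add_cancel] at hG
    rw [Real.exp_sub, Real.exp_sub, Real.exp_sub, Real.exp_sub] at hG
    set a := Real.exp (x k) with ha
    set b := Real.exp (xt k) with hb
    set c := Real.exp (xh k) with hc
    set d := Real.exp (xth k) with hd
    set A := Real.exp (x (k+1)) with hA
    set D := Real.exp (xth (k-1)) with hD
    have hGc : (b - a) * (lam * D + c) = (c - a) * (mu * D + b) := by
      have ha0 : a ≠ 0 := ha ▸ Real.exp_ne_zero _
      have hD0 : D ≠ 0 := hD ▸ Real.exp_ne_zero _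
      field_simp at hG
      linear_combination hG
    have key : (lam - mu) * (D * (c - a) * (mu * c + A)) =
        (lam - mu) * (a * (d - c) * (lam * D + c)) := by
      linear_combination (A + lam * d - (lam - mu) * c) * hGc - (lam * D + a) * hS1c k
    have key2 := mul_left_cancel₀ (sub_ne_zero.mpr hlm) key
    rw [Real.exp_sub, Real.exp_sub, Real.exp_sub, Real.exp_sub]
    field_simp
    simp only [← ha, ← hb, ← hc, ← hd, ← hA, ← hD]
    linear_combination key2
  · -- E12
    intro k
    set A := Real.exp (x (k+1)) with hA
    set b := Real.exp (xt k) with hb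
    set c := Real.exp (xh k) with hc
    set d := Real.exp (xth k) with hd
    set B := Real.exp (xt (k+1)) with hB
    set C := Real.exp (xh (k+1)) with hC
    have hfpos : lam * b + A ≠ 0 := by positivity
    have key : (lam * b + A) * (b * (d - c) * (lam * d + C)) =
        (lam * b + A) * (c * (d - b) * (mu * d + B)) := by
      linear_combination (b - d) * hEc k +
        (C * b + lam * b * d - (b - d) * A) * hS1c k
    have key2 := mul_left_cancel₀ hfpos key
    rw [Real.exp_sub, Real.exp_sub, Real.exp_sub, Real.exp_sub]
    field_simp
    simp only [← hA, ← hb, ← hc, ← hd, ← hB, ← hC]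
    linear_combination key2
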